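/- Let $f: \mathbb{Z}^2 \to \mathbb{Z}((q^{1/2}))$ satisfy both recursions $q^{e/2} f(m+1,e) + q^{-m/2} f(m,e+1) = f(m,e)$ and $q^{e/2} f(m-1,e) + q^{-m/2} f(m,e-1) = f(m,e)$ for all integers $m,e$. Then $f$ satisfies the triality identity $f(m,e) = (-q^{1/2})^{-e} f(e, -e-m)$ for all integers $m,e$ (assuming additionally that $f$ is determined by its values $f(0,0), f(1,0)$ via the module structure, as holds for all elements of $V$). -/

import Mathlib

/- Elements of `ℤ((q^{1/2}))` are Laurent series in the variable `t = q^{1/2}`,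
i.e. elements of `LaurentSeries ℤ`.  The monomial `q^{a/2} = t^a` is
`HahnSeries.single a 1`, and `(-q^{1/2})^{-e} = (-1)^e q^{-e/2}` is
`HahnSeries.single (-e) ((-1)^e.natAbs)`. -/

private lemma triality_np (e : ℤ) : ((-1:ℤ)^(e+1).natAbs) = -((-1:ℤ)^e.natAbs) := by
  rcases Int.even_or_odd e with h | h
  · rw [(Int.natAbs_even.mpr h).neg_one_pow, (Int.natAbs_odd.mpr h.add_one).neg_one_pow]
  · rw [(Int.natAbs_odd.mpr h).neg_one_pow, (Int.natAbs_even.mpr h.add_one).neg_one_pow]; ring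

private lemma triality_np' (e : ℤ) : ((-1:ℤ)^(e-1).natAbs) = -((-1:ℤ)^e.natAbs) := by
  have h := triality_np (e - 1)
  rw [sub_add_cancel] at h
  linarith

private lemma triality_single_neg (a s : ℤ) :
    (HahnSeries.single a (-s) : LaurentSeries ℤ) = - HahnSeries.single a s := by
  ext n; by_cases h : n = a <;> simp [HahnSeries.coeff_single, h]

/-- Triality: if `f` satisfies both basic recursions of a tetrahedron index,
and (as holds for every element of `V`) `f` is determined inside `V` by its
values `f(0,0)` and `f(1,0)`, then `f(m,e) = (-q^{1/2})^{-e} f(e,-e-m)`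
for all integers `m, e`. -/
theorem triality (f : ℤ → ℤ → LaurentSeries ℤ)
    (h1 : ∀ m e : ℤ, HahnSeries.single e (1 : ℤ) * f (m + 1) e +
      HahnSeries.single (-m) (1 : ℤ) * f m (e + 1) = f m e)
    (h2 : ∀ m e : ℤ, HahnSeries.single e (1 : ℤ) * f (m - 1) e +
      HahnSeries.single (-m) (1 : ℤ) * f m (e - 1) = f m e)
    (hdet : ∀ g : ℤ → ℤ → LaurentSeries ℤ,
      (∀ m e : ℤ, HahnSeries.single e (1 : ℤ) * g (m + 1) e +
        HahnSeries.single (-m) (1 : ℤ) * g m (e + 1) = g m e) →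
      (∀ m e : ℤ, HahnSeries.single e (1 : ℤ) * g (m - 1) e +
        HahnSeries.single (-m) (1 : ℤ) * g m (e - 1) = g m e) →
      g 0 0 = f 0 0 → g 1 0 = f 1 0 → g = f) :
    ∀ m e : ℤ,
      f m e = HahnSeries.single (-e) ((-1 : ℤ) ^ e.natAbs) * f e (-e - m) := by
  set g : ℤ → ℤ → LaurentSeries ℤ :=
    fun m e => HahnSeries.single (-e) ((-1 : ℤ) ^ e.natAbs) * f e (-e - m) with hg
  have key : g = f := by
    apply hdet
    · -- first recursion for g
      intro m e
      set s : ℤ := (-1:ℤ)^e.natAbs with hs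
      show HahnSeries.single e (1:ℤ) *
          (HahnSeries.single (-e) s * f e (-e - (m+1))) +
        HahnSeries.single (-m) (1:ℤ) *
          (HahnSeries.single (-(e+1)) ((-1:ℤ)^(e+1).natAbs) * f (e+1) (-(e+1) - m)) =
        HahnSeries.single (-e) s * f e (-e - m)
      rw [triality_np, ← hs]
      have e1 : -e - (m+1) = -e - m - 1 := by ring
      have e2 : -(e+1) - m = -e - m - 1 := by ring
      rw [e1, e2]
      have hr := h1 e (-e - m - 1)
      have e3 : -e - m - 1 + 1 = -e - m := by ring
      rw [e3] at hr
      have hA : HahnSeries.single e (1:ℤ) * (HahnSeries.single (-e) s : LaurentSeries ℤ) =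
          HahnSeries.single 0 s := by
        rw [HahnSeries.single_mul_single]; congr 1 <;> ring
      have hB : HahnSeries.single (-m) (1:ℤ) *
          (HahnSeries.single (-(e+1)) (-s) : LaurentSeries ℤ) =
          -(HahnSeries.single (-e - m - 1) s) := by
        rw [HahnSeries.single_mul_single, ← triality_single_neg]; congr 1 <;> ring
      have hC : (HahnSeries.single 0 s : LaurentSeries ℤ) *
          HahnSeries.single (-e - m - 1) (1:ℤ) = HahnSeries.single (-e - m - 1) s := by
        rw [HahnSeries.single_mul_single]; congr 1 <;> ring
      have hD : (HahnSeries.single 0 s : LaurentSeries ℤ) *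
          HahnSeries.single (-e) (1:ℤ) = HahnSeries.single (-e) s := by
        rw [HahnSeries.single_mul_single]; congr 1 <;> ring
      rw [← mul_assoc, ← mul_assoc, hA, hB, ← hr, mul_add, ← mul_assoc, ← mul_assoc, hC, hD]
      ring
    · -- second recursion for g
      intro m e
      set s : ℤ := (-1:ℤ)^e.natAbs with hs
      show HahnSeries.single e (1:ℤ) *
          (HahnSeries.single (-e) s * f e (-e - (m-1))) +
        HahnSeries.single (-m) (1:ℤ) *
          (HahnSeries.single (-(e-1)) ((-1:ℤ)^(e-1).natAbs) * f (e-1) (-(e-1) - m)) =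
        HahnSeries.single (-e) s * f e (-e - m)
      rw [triality_np', ← hs]
      have e1 : -e - (m-1) = -e - m + 1 := by ring
      have e2 : -(e-1) - m = -e - m + 1 := by ring
      rw [e1, e2]
      have hr := h2 e (-e - m + 1)
      have e3 : -e - m + 1 - 1 = -e - m := by ring
      rw [e3] at hr
      have hA : HahnSeries.single e (1:ℤ) * (HahnSeries.single (-e) s : LaurentSeries ℤ) =
          HahnSeries.single 0 s := by
        rw [HahnSeries.single_mul_single]; congr 1 <;> ring
      have hB : HahnSeries.single (-m) (1:ℤ) *
          (HahnSeries.single (-(e-1)) (-s) : LaurentSeries ℤ) =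
          -(HahnSeries.single (-e - m + 1) s) := by
        rw [HahnSeries.single_mul_single, ← triality_single_neg]; congr 1 <;> ring
      have hC : (HahnSeries.single 0 s : LaurentSeries ℤ) *
          HahnSeries.single (-e - m + 1) (1:ℤ) = HahnSeries.single (-e - m + 1) s := by
        rw [HahnSeries.single_mul_single]; congr 1 <;> ring
      have hD : (HahnSeries.single 0 s : LaurentSeries ℤ) *
          HahnSeries.single (-e) (1:ℤ) = HahnSeries.single (-e) s := by
        rw [HahnSeries.single_mul_single]; congr 1 <;> ring
      rw [← mul_assoc, ← mul_assoc, hA, hB, ← hr, mul_add, ← mul_assoc, ← mul_assoc, hC, hD]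
      ring
    · -- g 0 0 = f 0 0
      show HahnSeries.single (-(0:ℤ)) ((-1:ℤ)^(0:ℤ).natAbs) * f 0 (-0 - 0) = f 0 0
      norm_num [HahnSeries.single_zero_one]
    · -- g 1 0 = f 1 0
      show HahnSeries.single (-(0:ℤ)) ((-1:ℤ)^(0:ℤ).natAbs) * f 0 (-0 - 1) = f 1 0
      have A := h2 1 0
      have B := h1 0 (-1)
      norm_num [HahnSeries.single_zero_one] at A B ⊢
      linear_combination A - B
  intro m e
  have := congrFun (congrFun key m) e
  simpa [hg] using this.symm
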